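/- Let α, β be distinct positive integers and b an integer such that αx − βy = b has a solution in two distinct positive integers, and let A be the 1×2 matrix (α −β). If p = p(n) satisfies p·n^{1/3} → ∞, then with high probability Maker wins the (A,b)-game on [n]_p. -/

import Mathlib

variable {V : Type*} [DecidableEq V]

/-- Maker has a winning strategy in the Maker-Breaker game, given whose turn it is
(`true` = Maker to move), the remaining unclaimed board `R`, and Maker's current set `M`.
Maker wins if at the end of the game (all elements claimed) her set satisfies `win`. -/
def makerWinsAux (win : Finset V → Prop) : Bool → Finset V → Finset V → Prop
  | true, R, M =>
      if R.Nonempty then ∃ x, ∃ _h : x ∈ R, makerWinsAux win false (R.erase x) (insert x M)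
      else win M
  | false, R, M =>
      if R.Nonempty then ∀ x, x ∈ R → makerWinsAux win true (R.erase x) M
      else win M
termination_by _ R _ => R.card
decreasing_by
  · exact Finset.card_erase_lt_of_mem ‹x ∈ R›
  · exact Finset.card_erase_lt_of_mem ‹x ∈ R›

/-- Breaker has a winning strategy (Maker moves first). -/
def breakerWinsAux (win : Finset V → Prop) : Bool → Finset V → Finset V → Prop
  | true, R, M =>
      if R.Nonempty then ∀ x, x ∈ R → breakerWinsAux win false (R.erase x) (insert x M)
      else ¬ win M
  | false, R, M =>
      if R.Nonempty then ∃ x, ∃ _h : x ∈ R, breakerWinsAux win true (R.erase x) M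
      else ¬ win M
termination_by _ R _ => R.card
decreasing_by
  · exact Finset.card_erase_lt_of_mem ‹x ∈ R›
  · exact Finset.card_erase_lt_of_mem ‹x ∈ R›

/-- Maker wins the Maker-Breaker game on board `X` with winning condition `win`. -/
def MakerWins (win : Finset V → Prop) (X : Finset V) : Prop := makerWinsAux win true X ∅

/-- Breaker wins the Maker-Breaker game on board `X` with winning condition `win`. -/
def BreakerWins (win : Finset V → Prop) (X : Finset V) : Prop := breakerWinsAux win true X ∅

/-- Maker's winning condition in the `(A,b)`-game: her claimed set `M` contains all entries of
some `k`-distinct solution (in positive integers) of `A x = b`. -/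
def RadoWin {l k : ℕ} (A : Matrix (Fin l) (Fin k) ℤ) (b : Fin l → ℤ) (M : Finset ℕ) : Prop :=
  ∃ x : Fin k → ℕ, Function.Injective x ∧ (∀ i, x i ∈ M) ∧
    A.mulVec (fun i => (x i : ℤ)) = b

/-- The pair `(A,b)` is irredundant: `A x = b` has a `k`-distinct solution in positive integers. -/
def PairIrredundant {l k : ℕ} (A : Matrix (Fin l) (Fin k) ℤ) (b : Fin l → ℤ) : Prop :=
  ∃ x : Fin k → ℕ, Function.Injective x ∧ (∀ i, 0 < x i) ∧
    A.mulVec (fun i => (x i : ℤ)) = b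

/-- The matrix `A` is irredundant: `A x = 0` has a `k`-distinct solution in positive integers. -/
def MatIrredundant {l k : ℕ} (A : Matrix (Fin l) (Fin k) ℤ) : Prop :=
  PairIrredundant A 0

/-- Property (*): no rational linear combination of the rows of `A` has exactly two
nonzero entries. -/
def PropertyStar {l k : ℕ} (A : Matrix (Fin l) (Fin k) ℤ) : Prop :=
  ∀ c : Fin l → ℚ,
    (Finset.univ.filter fun j : Fin k => (∑ i, c i * (A i j : ℚ)) ≠ 0).card ≠ 2

/-- The rank (over `ℚ`) of an integer matrix. -/
noncomputable def rankQ {l k : ℕ} (A : Matrix (Fin l) (Fin k) ℤ) : ℕ :=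
  (A.map (Int.cast : ℤ → ℚ)).rank

/-- The rank (over `ℚ`) of the matrix `A_{W̄}` formed by the columns of `A` indexed by the
complement of `W`. -/
noncomputable def rankRestrict {l k : ℕ} (A : Matrix (Fin l) (Fin k) ℤ)
    (W : Finset (Fin k)) : ℕ :=
  ((A.map (Int.cast : ℤ → ℚ)).submatrix id (fun j : {j : Fin k // j ∈ Wᶜ} => j.1)).rank

/-- The parameter `m(A)`. -/
noncomputable def mIndex {l k : ℕ} (A : Matrix (Fin l) (Fin k) ℤ) : ℝ :=
  sSup {x : ℝ | ∃ W : Finset (Fin k), 2 ≤ W.card ∧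
    x = ((W.card : ℝ) - 1) / (((W.card : ℝ) - 1) + (rankRestrict A W : ℝ) - (rankQ A : ℝ))}

/-- `A` (an `ℓ×k` matrix of full rank `ℓ`) is strictly balanced. -/
def StrictlyBalanced {l k : ℕ} (A : Matrix (Fin l) (Fin k) ℤ) : Prop :=
  ∀ W : Finset (Fin k), 2 ≤ W.card → W.card < k →
    ((W.card : ℝ) - 1) / (((W.card : ℝ) - 1) + (rankRestrict A W : ℝ) - (l : ℝ))
      < ((k : ℝ) - 1) / ((k : ℝ) - 1 - (l : ℝ))

open Classical in
/-- `μ(n,A,b)`: the maximum size of a subset of `[n] = {1,…,n}` containing no `k`-distinct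
solution to `A x = b`. -/
noncomputable def muMax {l k : ℕ} (n : ℕ) (A : Matrix (Fin l) (Fin k) ℤ) (b : Fin l → ℤ) : ℕ :=
  (((Finset.Icc 1 n).powerset.filter fun S => ¬ RadoWin A b S).sup Finset.card)

open Classical in
/-- The probability that the random subset `[n]_p` (each element of `{1,…,n}` included
independently with probability `p`) satisfies the property `P`. -/
noncomputable def probRandomSubset (n : ℕ) (p : ℝ) (P : Finset ℕ → Prop) : ℝ :=
  ∑ S ∈ (Finset.Icc 1 n).powerset,
    if P S then p ^ S.card * (1 - p) ^ (n - S.card) else 0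

/-- Maker wins the `(A,b)`-game on the board `X` (Maker moves first). -/
def MakerWinsRado {l k : ℕ} (A : Matrix (Fin l) (Fin k) ℤ) (b : Fin l → ℤ)
    (X : Finset ℕ) : Prop :=
  MakerWins (RadoWin A b) X

/-- Breaker wins the `(A,b)`-game on the board `X` (Maker moves first). -/
def BreakerWinsRado {l k : ℕ} (A : Matrix (Fin l) (Fin k) ℤ) (b : Fin l → ℤ)
    (X : Finset ℕ) : Prop :=
  BreakerWins (RadoWin A b) X


/-! ### Auxiliary lemmas -/

section AuxGame

lemma makerWinsAux_of_win {win : Finset V → Prop}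
    (hmono : ∀ ⦃M N : Finset V⦄, M ⊆ N → win M → win N) :
    ∀ (R : Finset V) (t : Bool) (M : Finset V), win M → makerWinsAux win t R M := by
  intro R
  induction R using Finset.strongInduction with
  | _ R ih =>
    intro t M hM
    cases t <;> rw [makerWinsAux]
    · split_ifs with h
      · intro x hx
        exact ih _ (Finset.erase_ssubset hx) true M hM
      · exact hM
    · split_ifs with h
      · obtain ⟨x, hx⟩ := h
        exact ⟨x, hx, ih _ (Finset.erase_ssubset hx) false _ (hmono (Finset.subset_insert _ _) hM)⟩
      · exact hM

lemma maker_cherry {win : Finset V → Prop}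
    (hmono : ∀ ⦃M N : Finset V⦄, M ⊆ N → win M → win N)
    {X : Finset V} {v u w : V} (hv : v ∈ X) (hu : u ∈ X) (hw : w ∈ X)
    (hvu : v ≠ u) (hvw : v ≠ w) (huw : u ≠ w)
    (h1 : win {v, u}) (h2 : win {v, w}) : MakerWins win X := by
  unfold MakerWins
  rw [makerWinsAux]
  rw [if_pos ⟨v, hv⟩]
  refine ⟨v, hv, ?_⟩
  rw [makerWinsAux]
  have hu1 : u ∈ X.erase v := Finset.mem_erase.2 ⟨fun h => hvu h.symm, hu⟩
  have hw1 : w ∈ X.erase v := Finset.mem_erase.2 ⟨fun h => hvw h.symm, hw⟩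
  rw [if_pos ⟨u, hu1⟩]
  intro x hx
  rw [makerWinsAux]
  by_cases hxu : x = u
  · have hw2 : w ∈ (X.erase v).erase x := Finset.mem_erase.2 ⟨fun h => huw (hxu ▸ h.symm), hw1⟩
    rw [if_pos ⟨w, hw2⟩]
    refine ⟨w, hw2, makerWinsAux_of_win hmono _ false _ ?_⟩
    exact hmono (by intro z hz; simp at hz ⊢; tauto) h2
  · have hu2 : u ∈ (X.erase v).erase x := Finset.mem_erase.2 ⟨fun h => hxu h.symm, hu1⟩
    rw [if_pos ⟨u, hu2⟩]
    refine ⟨u, hu2, makerWinsAux_of_win hmono _ false _ ?_⟩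
    exact hmono (by intro z hz; simp at hz ⊢; tauto) h1

end AuxGame

/-- total weight over a powerset is 1 -/
lemma sum_wgt_one (p : ℝ) (U : Finset ℕ) :
    ∑ S ∈ U.powerset, p ^ S.card * (1 - p) ^ (U.card - S.card) = 1 := by
  induction U using Finset.induction_on with
  | empty => simp
  | @insert a U ha ih =>
    rw [Finset.sum_powerset_insert ha]
    have h1 : ∀ S ∈ U.powerset,
        p ^ S.card * (1 - p) ^ ((insert a U).card - S.card)
        = (1 - p) * (p ^ S.card * (1 - p) ^ (U.card - S.card)) := by
      intro S hS
      have hc : S.card ≤ U.card := Finset.card_le_card (Finset.mem_powerset.1 hS)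
      rw [Finset.card_insert_of_notMem ha]
      rw [show U.card + 1 - S.card = (U.card - S.card) + 1 by omega]
      ring
    have h2 : ∀ S ∈ U.powerset,
        p ^ (insert a S).card * (1 - p) ^ ((insert a U).card - (insert a S).card)
        = p * (p ^ S.card * (1 - p) ^ (U.card - S.card)) := by
      intro S hS
      have haS : a ∉ S := fun h => ha (Finset.mem_powerset.1 hS h)
      have hc : S.card ≤ U.card := Finset.card_le_card (Finset.mem_powerset.1 hS)
      rw [Finset.card_insert_of_notMem ha, Finset.card_insert_of_notMem haS]
      rw [show U.card + 1 - (S.card + 1) = U.card - S.card by omega]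
      ring
    rw [Finset.sum_congr rfl h1, Finset.sum_congr rfl h2, ← Finset.mul_sum, ← Finset.mul_sum, ih]
    ring

/-- sum over powerset of a disjoint union factors into a double sum -/
lemma sum_powerset_union (A B : Finset ℕ) (h : Disjoint A B) (f : Finset ℕ → ℝ) :
    ∑ S ∈ (A ∪ B).powerset, f S = ∑ T ∈ A.powerset, ∑ R ∈ B.powerset, f (T ∪ R) := by
  induction B using Finset.induction_on generalizing f with
  | empty => simp
  | @insert b B hb ih =>
    have hAB : Disjoint A B := h.mono_right (Finset.subset_insert _ _)
    have hbAB : b ∉ A ∪ B := by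
      simp only [Finset.mem_union, not_or]
      exact ⟨Finset.disjoint_right.1 h (Finset.mem_insert_self _ _), hb⟩
    rw [Finset.union_insert, Finset.sum_powerset_insert hbAB,
      ih hAB f, ih hAB (fun S => f (insert b S))]
    rw [← Finset.sum_add_distrib]
    refine Finset.sum_congr rfl fun T hT => ?_
    rw [Finset.sum_powerset_insert hb]
    congr 1
    exact Finset.sum_congr rfl fun R hR => by rw [Finset.union_insert]
open Classical in
lemma avoid_bound (p : ℝ) (hp0 : 0 ≤ p) (hp1 : p ≤ 1) (C : ℕ → Finset ℕ) :
    ∀ (T : ℕ) (U : Finset ℕ), (∀ t, t < T → C t ⊆ U) →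
    (∀ s t, s < T → t < T → s ≠ t → Disjoint (C s) (C t)) →
    (∀ t, t < T → (C t).card = 3) →
    ∑ S ∈ U.powerset,
      (if ∀ t, t < T → ¬ C t ⊆ S then p ^ S.card * (1 - p) ^ (U.card - S.card) else 0)
      ≤ (1 - p ^ 3) ^ T := by
  have hw : ∀ (m k : ℕ), 0 ≤ p ^ k * (1 - p) ^ (m - k) :=
    fun m k => mul_nonneg (pow_nonneg hp0 _) (pow_nonneg (by linarith) _)
  have h1p3 : 0 ≤ 1 - p ^ 3 := by
    have := pow_le_one₀ hp0 hp1 (n := 3)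
    linarith
  intro T
  induction T with
  | zero =>
    intro U _ _ _
    simp only [Nat.not_lt_zero, false_implies, implies_true, if_true, pow_zero]
    rw [sum_wgt_one]
  | succ T ih =>
    intro U hCU hdisj hcard
    have hCTU : C T ⊆ U := hCU T (Nat.lt_succ_self _)
    set A := U \ C T with hA
    have hdAC : Disjoint A (C T) := Finset.sdiff_disjoint
    have hUA : A ∪ C T = U := Finset.sdiff_union_of_subset hCTU
    have hUcard : U.card = A.card + (C T).card := by
      rw [← hUA, Finset.card_union_of_disjoint hdAC]
    have hCT3 : (C T).card = 3 := hcard T (Nat.lt_succ_self _)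
    rw [← hUA, sum_powerset_union A (C T) hdAC]
    have hterm : ∀ S ∈ A.powerset, ∀ R ∈ (C T).powerset,
        (if ∀ t, t < T + 1 → ¬ C t ⊆ S ∪ R then
          p ^ (S ∪ R).card * (1 - p) ^ ((A ∪ C T).card - (S ∪ R).card) else 0)
        = (if ∀ t, t < T → ¬ C t ⊆ S then p ^ S.card * (1 - p) ^ (A.card - S.card) else 0)
          * (if R = C T then 0 else p ^ R.card * (1 - p) ^ ((C T).card - R.card)) := by
      intro S hS R hR
      rw [Finset.mem_powerset] at hS hR
      have hSR : Disjoint S R := (hdAC.mono hS hR)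
      have hcardSR : (S ∪ R).card = S.card + R.card := Finset.card_union_of_disjoint hSR
      have hSA : S.card ≤ A.card := Finset.card_le_card hS
      have hRC : R.card ≤ (C T).card := Finset.card_le_card hR
      have hcond : (∀ t, t < T + 1 → ¬ C t ⊆ S ∪ R) ↔
          (∀ t, t < T → ¬ C t ⊆ S) ∧ R ≠ C T := by
        constructor
        · intro h
          refine ⟨fun t ht hsub => h t (Nat.lt_succ_of_lt ht) (hsub.trans Finset.subset_union_left), ?_⟩
          intro hRCT
          exact h T (Nat.lt_succ_self _) (by rw [← hRCT]; exact Finset.subset_union_right)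
        · rintro ⟨h1, h2⟩ t ht hsub
          rcases Nat.lt_succ_iff_lt_or_eq.1 ht with ht' | rfl
          · refine h1 t ht' fun z hz => ?_
            rcases Finset.mem_union.1 (hsub hz) with hzS | hzR
            · exact hzS
            · exact absurd (hR hzR)
                (Finset.disjoint_left.1 (hdisj t T (Nat.lt_succ_of_lt ht') (Nat.lt_succ_self _)
                  (Nat.ne_of_lt ht')) hz)
          · refine h2 (Finset.Subset.antisymm hR fun z hz => ?_)
            rcases Finset.mem_union.1 (hsub hz) with hzS | hzR
            · exact absurd (hS hzS) (Finset.disjoint_left.1 hdAC.symm hz)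
            · exact hzR
      by_cases h : ∀ t, t < T + 1 → ¬ C t ⊆ S ∪ R
      · obtain ⟨hL, hRne⟩ := hcond.1 h
        rw [if_pos h, if_pos hL, if_neg hRne, hcardSR,
          Finset.card_union_of_disjoint hdAC,
          show A.card + (C T).card - (S.card + R.card)
            = (A.card - S.card) + ((C T).card - R.card) by omega, pow_add, pow_add]
        ring
      · rw [if_neg h]
        rw [hcond, not_and_or] at h
        rcases h with h | h
        · rw [if_neg h, zero_mul]
        · rw [not_not.1 h, if_pos rfl, mul_zero]
    rw [Finset.sum_congr rfl fun S hS => Finset.sum_congr rfl fun R hR => hterm S hS R hR]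
    have hinner : ∀ S : Finset ℕ,
        ∑ R ∈ (C T).powerset,
          ((if ∀ t, t < T → ¬ C t ⊆ S then p ^ S.card * (1 - p) ^ (A.card - S.card) else 0)
          * (if R = C T then 0 else p ^ R.card * (1 - p) ^ ((C T).card - R.card)))
        = (if ∀ t, t < T → ¬ C t ⊆ S then p ^ S.card * (1 - p) ^ (A.card - S.card) else 0)
          * (1 - p ^ 3) := by
      intro S
      rw [← Finset.mul_sum]
      congr 1
      have : ∀ R ∈ (C T).powerset,
          (if R = C T then 0 else p ^ R.card * (1 - p) ^ ((C T).card - R.card))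
          = p ^ R.card * (1 - p) ^ ((C T).card - R.card)
            - (if R = C T then p ^ R.card * (1 - p) ^ ((C T).card - R.card) else 0) := by
        intro R _
        split <;> simp
      rw [Finset.sum_congr rfl this, Finset.sum_sub_distrib, sum_wgt_one,
        Finset.sum_ite_eq' (C T).powerset (C T)
          (fun R => p ^ R.card * (1 - p) ^ ((C T).card - R.card)),
        if_pos (Finset.mem_powerset.2 (Finset.Subset.refl _)), Nat.sub_self, pow_zero, mul_one,
        hCT3]
    rw [Finset.sum_congr rfl fun S _ => hinner S, ← Finset.sum_mul, pow_succ]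
    have hSA : ∑ S ∈ A.powerset,
        (if ∀ t, t < T → ¬ C t ⊆ S then p ^ S.card * (1 - p) ^ (A.card - S.card) else 0)
        ≤ (1 - p ^ 3) ^ T := by
      refine ih A (fun t ht => ?_) (fun s t hs ht => hdisj s t (Nat.lt_succ_of_lt hs) (Nat.lt_succ_of_lt ht)) (fun t ht => hcard t (Nat.lt_succ_of_lt ht))
      exact Finset.subset_sdiff.2 ⟨hCU t (Nat.lt_succ_of_lt ht),
        hdisj t T (Nat.lt_succ_of_lt ht) (Nat.lt_succ_self _) (Nat.ne_of_lt ht)⟩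
    have hSA0 : 0 ≤ ∑ S ∈ A.powerset,
        (if ∀ t, t < T → ¬ C t ⊆ S then p ^ S.card * (1 - p) ^ (A.card - S.card) else 0) := by
      refine Finset.sum_nonneg fun S _ => ?_
      split
      · exact hw _ _
      · exact le_refl 0
    exact mul_le_mul hSA (le_refl _) h1p3 (pow_nonneg h1p3 _)

open Classical in
lemma prob_le_one (n : ℕ) (p : ℝ) (hp0 : 0 ≤ p) (hp1 : p ≤ 1) (P : Finset ℕ → Prop) :
    probRandomSubset n p P ≤ 1 := by
  have hcard : (Finset.Icc 1 n).card = n := by rw [Nat.card_Icc]; omega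
  rw [probRandomSubset]
  calc ∑ S ∈ (Finset.Icc 1 n).powerset,
        (if P S then p ^ S.card * (1 - p) ^ (n - S.card) else 0)
      ≤ ∑ S ∈ (Finset.Icc 1 n).powerset, p ^ S.card * (1 - p) ^ (n - S.card) := by
        refine Finset.sum_le_sum fun S _ => ?_
        split
        · exact le_refl _
        · exact mul_nonneg (pow_nonneg hp0 _) (pow_nonneg (by linarith) _)
    _ = 1 := by
        have := sum_wgt_one p (Finset.Icc 1 n); rwa [hcard] at this

open Classical in
lemma prob_ge (n : ℕ) (p : ℝ) (hp0 : 0 ≤ p) (hp1 : p ≤ 1) (P : Finset ℕ → Prop)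
    (C : ℕ → Finset ℕ) (T : ℕ)
    (hsub : ∀ t, t < T → C t ⊆ Finset.Icc 1 n)
    (hdisj : ∀ s t, s < T → t < T → s ≠ t → Disjoint (C s) (C t))
    (hcard3 : ∀ t, t < T → (C t).card = 3)
    (himp : ∀ S : Finset ℕ, (∃ t, t < T ∧ C t ⊆ S) → P S) :
    1 - (1 - p ^ 3) ^ T ≤ probRandomSubset n p P := by
  have hcard : (Finset.Icc 1 n).card = n := by rw [Nat.card_Icc]; omega
  have hw : ∀ S : Finset ℕ, 0 ≤ p ^ S.card * (1 - p) ^ (n - S.card) :=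
    fun S => mul_nonneg (pow_nonneg hp0 _) (pow_nonneg (by linarith) _)
  have key : ∑ S ∈ (Finset.Icc 1 n).powerset,
      (if ¬ (∃ t, t < T ∧ C t ⊆ S) then p ^ S.card * (1 - p) ^ (n - S.card) else 0)
      ≤ (1 - p ^ 3) ^ T := by
    have := avoid_bound p hp0 hp1 C T (Finset.Icc 1 n) hsub hdisj hcard3
    rw [hcard] at this
    refine le_trans (le_of_eq (Finset.sum_congr rfl fun S _ => ?_)) this
    refine if_congr ?_ rfl rfl
    push_neg
    constructor
    · intro h t ht; exact h t ht
    · intro h t ht; exact h t ht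
  have hsplit : probRandomSubset n p (fun S => ∃ t, t < T ∧ C t ⊆ S)
      + ∑ S ∈ (Finset.Icc 1 n).powerset,
        (if ¬ (∃ t, t < T ∧ C t ⊆ S) then p ^ S.card * (1 - p) ^ (n - S.card) else 0) = 1 := by
    have htot : ∑ S ∈ (Finset.Icc 1 n).powerset, p ^ S.card * (1 - p) ^ (n - S.card) = 1 := by
      have := sum_wgt_one p (Finset.Icc 1 n); rwa [hcard] at this
    rw [probRandomSubset, ← Finset.sum_add_distrib]
    refine (Finset.sum_congr rfl fun S _ => ?_).trans htot
    by_cases h : ∃ t, t < T ∧ C t ⊆ S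
    · simp [h]
    · simp [h]
  have hmono : probRandomSubset n p (fun S => ∃ t, t < T ∧ C t ⊆ S)
      ≤ probRandomSubset n p P := by
    rw [probRandomSubset, probRandomSubset]
    refine Finset.sum_le_sum fun S _ => ?_
    by_cases h : ∃ t, t < T ∧ C t ⊆ S
    · rw [if_pos h, if_pos (himp S h)]
    · rw [if_neg h]
      split
      · exact hw S
      · exact le_refl 0
  linarith

set_option maxHeartbeats 1000000 in
lemma base_cherry (α β : ℤ) (hα : 0 < α) (hβ : 0 < β) (hne : α ≠ β) (b : ℤ)
    (hAb : ∃ x y : ℕ, 0 < x ∧ 0 < y ∧ x ≠ y ∧ α * (x : ℤ) - β * (y : ℤ) = b) :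
    ∃ v u w : ℤ, 0 < v ∧ 0 < u ∧ 0 < w ∧ v ≠ u ∧ v ≠ w ∧ u ≠ w ∧
      α * v - β * u = b ∧ α * w - β * v = b := by
  obtain ⟨x0, y0, hx0, hy0, _, hb⟩ := hAb
  obtain ⟨X, hX⟩ : ∃ X : ℤ, X = (x0 : ℤ) := ⟨_, rfl⟩
  obtain ⟨Y, hY⟩ : ∃ Y : ℤ, Y = (y0 : ℤ) := ⟨_, rfl⟩
  rw [← hX, ← hY] at hb
  obtain ⟨g, hgdef⟩ : ∃ g : ℤ, g = (Int.gcd α β : ℤ) := ⟨_, rfl⟩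
  have hg : 0 < g := by
    rw [hgdef]
    have := Int.gcd_pos_of_ne_zero_left β hα.ne'
    exact_mod_cast this
  obtain ⟨ap, hap⟩ : g ∣ α := hgdef ▸ Int.gcd_dvd_left α β
  obtain ⟨bp, hbp⟩ : g ∣ β := hgdef ▸ Int.gcd_dvd_right α β
  have hap1 : 0 < ap := by
    by_contra h
    push_neg at h
    have h2 : g * ap ≤ 0 := mul_nonpos_iff.2 (Or.inl ⟨hg.le, h⟩)
    rw [← hap] at h2
    linarith
  have hbp1 : 0 < bp := by
    by_contra h
    push_neg at h
    have h2 : g * bp ≤ 0 := mul_nonpos_iff.2 (Or.inl ⟨hg.le, h⟩)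
    rw [← hbp] at h2
    linarith
  have hcop : IsCoprime ap bp := by
    rw [Int.isCoprime_iff_gcd_eq_one]
    have h1 : α / g = ap := by rw [hap]; exact Int.mul_ediv_cancel_left ap hg.ne'
    have h2 : β / g = bp := by rw [hbp]; exact Int.mul_ediv_cancel_left bp hg.ne'
    have hgn : 0 < Int.gcd α β := Int.gcd_pos_of_ne_zero_left β hα.ne'
    have := Int.gcd_div_gcd_div_gcd (i := α) (j := β) hgn
    rwa [← hgdef, h1, h2] at this
  obtain ⟨aa, cc, hac⟩ := hcop
  obtain ⟨c1, hc1⟩ : ∃ c : ℤ, c = X * aa * ap + Y * cc * bp := ⟨_, rfl⟩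
  obtain ⟨c2, hc2⟩ : ∃ c : ℤ, c = ap * cc * (Y - X) + Y := ⟨_, rfl⟩
  obtain ⟨c3, hc3⟩ : ∃ c : ℤ, c = aa * bp * (X - Y) + X := ⟨_, rfl⟩
  obtain ⟨k, hk⟩ : ∃ k : ℤ, k = |c1| + |c2| + |c3| + |b| + 1 := ⟨_, rfl⟩
  obtain ⟨v, hv⟩ : ∃ v : ℤ, v = c1 + ap * bp * k := ⟨_, rfl⟩
  obtain ⟨u, hu⟩ : ∃ u : ℤ, u = c2 + ap * ap * k := ⟨_, rfl⟩
  obtain ⟨w, hw⟩ : ∃ w : ℤ, w = c3 + bp * bp * k := ⟨_, rfl⟩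
  have habs1 := abs_nonneg c1
  have habs2 := abs_nonneg c2
  have habs3 := abs_nonneg c3
  have habsb := abs_nonneg b
  have hna1 := neg_abs_le c1
  have hna2 := neg_abs_le c2
  have hna3 := neg_abs_le c3
  have hk0 : 0 < k := by rw [hk]; linarith
  have h1a : (1:ℤ) ≤ ap := hap1
  have h1b : (1:ℤ) ≤ bp := hbp1
  have hab2 : (1:ℤ) ≤ ap * bp := by
    have := mul_le_mul h1a h1b zero_le_one (by linarith : (0:ℤ) ≤ ap)
    linarith
  have haa2 : (1:ℤ) ≤ ap * ap := by
    have := mul_le_mul h1a h1a zero_le_one (by linarith : (0:ℤ) ≤ ap)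
    linarith
  have hbb2 : (1:ℤ) ≤ bp * bp := by
    have := mul_le_mul h1b h1b zero_le_one (by linarith : (0:ℤ) ≤ bp)
    linarith
  have m1 : k ≤ ap * bp * k := by
    have := mul_le_mul_of_nonneg_right hab2 hk0.le
    linarith
  have m2 : k ≤ ap * ap * k := by
    have := mul_le_mul_of_nonneg_right haa2 hk0.le
    linarith
  have m3 : k ≤ bp * bp * k := by
    have := mul_le_mul_of_nonneg_right hbb2 hk0.le
    linarith
  have hvpos : |b| < v := by rw [hv]; linarith
  have hupos : 0 < u := by rw [hu]; linarith
  have hwpos : 0 < w := by rw [hw]; linarith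
  have hbX : g * ap * X - g * bp * Y = b := by rw [← hap, ← hbp]; exact hb
  have e1 : α * v - β * u = b := by
    rw [hap, hbp, hv, hu, hc1, hc2]
    linear_combination (g * ap * X) * hac + hbX
  have e2 : α * w - β * v = b := by
    rw [hap, hbp, hw, hv, hc1, hc3]
    linear_combination (-(g * bp * Y)) * hac + hbX
  have hnd : (α - β) * v ≠ b := by
    intro h
    have h1 : (1 : ℤ) ≤ |α - β| := Int.one_le_abs (sub_ne_zero.2 hne)
    have h2 : |b| = |α - β| * |v| := by rw [← h, abs_mul]
    have h3 : |v| = v := abs_of_pos (lt_of_le_of_lt habsb hvpos)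
    rw [h3] at h2
    have h4 : 1 * v ≤ |α - β| * v := mul_le_mul_of_nonneg_right h1 (le_of_lt (lt_of_le_of_lt habsb hvpos))
    linarith
  have hvu : v ≠ u := by
    intro h
    apply hnd
    linear_combination e1 - β * h
  have hvw : v ≠ w := by
    intro h
    apply hnd
    linear_combination e2 + α * h
  have huw : u ≠ w := by
    intro h
    apply hvu
    have h0 : (α + β) * (v - u) = 0 := by linear_combination e1 - e2 - α * h
    rcases mul_eq_zero.1 h0 with h' | h'
    · linarith
    · linarith
  exact ⟨v, u, w, lt_of_le_of_lt habsb hvpos, hupos, hwpos, hvu, hvw, huw, e1, e2⟩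
lemma radoWin_mono {l k : ℕ} (A : Matrix (Fin l) (Fin k) ℤ) (b : Fin l → ℤ)
    {M N : Finset ℕ} (h : M ⊆ N) (hw : RadoWin A b M) : RadoWin A b N := by
  obtain ⟨x, hi, hm, he⟩ := hw
  exact ⟨x, hi, fun i => h (hm i), he⟩

lemma radoWin_pair (α β b : ℤ) (a c : ℕ) (hac : a ≠ c)
    (h : α * (a : ℤ) - β * (c : ℤ) = b) :
    RadoWin (Matrix.of fun _ : Fin 1 => ![α, -β]) (fun _ => b) ({a, c} : Finset ℕ) := by
  refine ⟨![a, c], ?_, ?_, ?_⟩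
  · intro i j hij
    fin_cases i <;> fin_cases j <;> simp_all
  · intro i
    fin_cases i <;> simp
  · funext i
    fin_cases i
    simp [Matrix.mulVec, dotProduct, Fin.sum_univ_two]
    linarith
/-- Theorem 4.1(i) of the paper. For the equation `α x - β y = b` with
`α, β` distinct positive integers, having a solution in two distinct positive integers,
if `p·n^{1/3} → ∞` then w.h.p. Maker wins the `(A,b)`-game on `[n]_p`. -/
theorem not_star_maker_win (α β : ℤ) (hα : 0 < α) (hβ : 0 < β) (hne : α ≠ β) (b : ℤ)
    (hAb : ∃ x y : ℕ, 0 < x ∧ 0 < y ∧ x ≠ y ∧ α * (x : ℤ) - β * (y : ℤ) = b)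
    (p : ℕ → ℝ) (hp : ∀ n, 0 ≤ p n ∧ p n ≤ 1)
    (hpinf : Filter.Tendsto (fun n : ℕ => p n * (n : ℝ) ^ ((1 : ℝ) / 3))
      Filter.atTop Filter.atTop) :
    Filter.Tendsto
      (fun n => probRandomSubset n (p n) (fun S =>
        MakerWinsRado (Matrix.of fun _ : Fin 1 => ![α, -β]) (fun _ => b) S))
      Filter.atTop (nhds 1) := by
  classical
  obtain ⟨v, u, w, hv, hu, hw, hvu, hvw, huw, e1, e2⟩ := base_cherry α β hα hβ hne b hAb
  obtain ⟨vN, hvN, hvc⟩ : ∃ vN : ℕ, 0 < vN ∧ (vN : ℤ) = v :=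
    ⟨v.toNat, by have := Int.toNat_of_nonneg hv.le; omega, Int.toNat_of_nonneg hv.le⟩
  obtain ⟨uN, huN, huc⟩ : ∃ uN : ℕ, 0 < uN ∧ (uN : ℤ) = u :=
    ⟨u.toNat, by have := Int.toNat_of_nonneg hu.le; omega, Int.toNat_of_nonneg hu.le⟩
  obtain ⟨wN, hwN, hwc⟩ : ∃ wN : ℕ, 0 < wN ∧ (wN : ℤ) = w :=
    ⟨w.toNat, by have := Int.toNat_of_nonneg hw.le; omega, Int.toNat_of_nonneg hw.le⟩
  obtain ⟨aN, haN, hac2⟩ : ∃ aN : ℕ, 0 < aN ∧ (aN : ℤ) = α :=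
    ⟨α.toNat, by have := Int.toNat_of_nonneg hα.le; omega, Int.toNat_of_nonneg hα.le⟩
  obtain ⟨bN, hbN, hbc2⟩ : ∃ bN : ℕ, 0 < bN ∧ (bN : ℤ) = β :=
    ⟨β.toNat, by have := Int.toNat_of_nonneg hβ.le; omega, Int.toNat_of_nonneg hβ.le⟩
  have hvuN : vN ≠ uN := fun h => hvu (by rw [← hvc, ← huc, h])
  have hvwN : vN ≠ wN := fun h => hvw (by rw [← hvc, ← hwc, h])
  have huwN : uN ≠ wN := fun h => huw (by rw [← huc, ← hwc, h])
  obtain ⟨m, hmeq⟩ : ∃ m : ℕ, m = vN + uN + wN := ⟨_, rfl⟩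
  have hvm : vN < m := by omega
  have hum : uN < m := by omega
  have hwm : wN < m := by omega
  have hm0 : 0 < m := by omega
  obtain ⟨cv, hcveq⟩ : ∃ c : ℕ, c = aN * bN := ⟨_, rfl⟩
  obtain ⟨cu, hcueq⟩ : ∃ c : ℕ, c = aN * aN := ⟨_, rfl⟩
  obtain ⟨cw, hcweq⟩ : ∃ c : ℕ, c = bN * bN := ⟨_, rfl⟩
  have hcv0 : 0 < cv := by rw [hcveq]; exact Nat.mul_pos haN hbN
  have hcu0 : 0 < cu := by rw [hcueq]; exact Nat.mul_pos haN haN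
  have hcw0 : 0 < cw := by rw [hcweq]; exact Nat.mul_pos hbN hbN
  have hcvZ : ((cv : ℕ) : ℤ) = α * β := by rw [hcveq]; push_cast; rw [hac2, hbc2]
  have hcuZ : ((cu : ℕ) : ℤ) = α * α := by rw [hcueq]; push_cast; rw [hac2]
  have hcwZ : ((cw : ℕ) : ℤ) = β * β := by rw [hcweq]; push_cast; rw [hbc2]
  obtain ⟨C, hC⟩ : ∃ C : ℕ → Finset ℕ,
      C = fun t => ({vN + cv * m * t, uN + cu * m * t, wN + cw * m * t} : Finset ℕ) := ⟨_, rfl⟩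
  have hCt : ∀ t, C t = ({vN + cv * m * t, uN + cu * m * t, wN + cw * m * t} : Finset ℕ) :=
    fun t => by rw [hC]
  obtain ⟨D, hDeq⟩ : ∃ d : ℕ, d = cv * m + cu * m + cw * m := ⟨_, rfl⟩
  obtain ⟨K, hKeq⟩ : ∃ k : ℕ, k = m + D := ⟨_, rfl⟩
  have hK0 : 0 < K := by omega
  -- residues
  have hres : ∀ (x c t : ℕ), x < m → (x + c * m * t) % m = x := by
    intro x c t hx
    rw [show c * m * t = x.succ * 0 + m * (c * t) by ring]
    rw [show x + (x.succ * 0 + m * (c * t)) = x + m * (c * t) by ring]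
    rw [Nat.add_mul_mod_self_left, Nat.mod_eq_of_lt hx]
  have hcross : ∀ (x y c d s t : ℕ), x < m → y < m → x ≠ y →
      x + c * m * s ≠ y + d * m * t := by
    intro x y c d s t hx hy hxy h
    apply hxy
    have h2 := congrArg (· % m) h
    rwa [hres _ _ _ hx, hres _ _ _ hy] at h2
  have hsame : ∀ (x c s t : ℕ), 0 < c → x + c * m * s = x + c * m * t → s = t := by
    intro x c s t hc h
    have h2 : c * m * s = c * m * t := by omega
    exact Nat.eq_of_mul_eq_mul_left (Nat.mul_pos hc hm0) h2
  have hne12 : ∀ t, vN + cv * m * t ≠ uN + cu * m * t :=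
    fun t => hcross _ _ _ _ _ _ hvm hum hvuN
  have hne13 : ∀ t, vN + cv * m * t ≠ wN + cw * m * t :=
    fun t => hcross _ _ _ _ _ _ hvm hwm hvwN
  have hne23 : ∀ t, uN + cu * m * t ≠ wN + cw * m * t :=
    fun t => hcross _ _ _ _ _ _ hum hwm huwN
  have hcard3 : ∀ t, (C t).card = 3 := by
    intro t
    rw [hCt t]
    rw [Finset.card_insert_of_notMem (by simp [hne12 t, hne13 t]),
      Finset.card_insert_of_notMem (by simp [hne23 t]), Finset.card_singleton]
  have hdisj : ∀ s t, s ≠ t → Disjoint (C s) (C t) := by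
    intro s t hst
    rw [Finset.disjoint_left]
    intro z hz hz'
    rw [hCt s] at hz
    rw [hCt t] at hz'
    simp only [Finset.mem_insert, Finset.mem_singleton] at hz hz'
    rcases hz with h | h | h <;> rcases hz' with h' | h' | h' <;> rw [h] at h'
    · exact hst (hsame _ _ _ _ hcv0 h')
    · exact hcross _ _ _ _ _ _ hvm hum hvuN h'
    · exact hcross _ _ _ _ _ _ hvm hwm hvwN h'
    · exact hcross _ _ _ _ _ _ hum hvm hvuN.symm h'
    · exact hst (hsame _ _ _ _ hcu0 h')
    · exact hcross _ _ _ _ _ _ hum hwm huwN h'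
    · exact hcross _ _ _ _ _ _ hwm hvm hvwN.symm h'
    · exact hcross _ _ _ _ _ _ hwm hum huwN.symm h'
    · exact hst (hsame _ _ _ _ hcw0 h')
  -- subset of the board
  have hsub : ∀ n t, t < n / K → C t ⊆ Finset.Icc 1 n := by
    intro n t ht
    have hq : 0 < n / K := lt_of_le_of_lt (Nat.zero_le t) ht
    have hKn : K * (n / K) ≤ n := by
      rw [Nat.mul_comm]
      exact Nat.div_mul_le_self n K
    have helt : ∀ x c : ℕ, 0 < x → x < m → c * m ≤ D → x + c * m * t ∈ Finset.Icc 1 n := by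
      intro x c hx0 hx hcmD
      rw [Finset.mem_Icc]
      refine ⟨by omega, ?_⟩
      calc x + c * m * t ≤ m + D * t :=
            Nat.add_le_add hx.le (Nat.mul_le_mul hcmD (le_refl t))
        _ ≤ m * (n / K) + D * t := Nat.add_le_add_right (Nat.le_mul_of_pos_right m hq) _
        _ ≤ m * (n / K) + D * (n / K) :=
            Nat.add_le_add_left (Nat.mul_le_mul (le_refl D) ht.le) _
        _ = K * (n / K) := by rw [hKeq, add_mul]
        _ ≤ n := hKn
    have hcvD : cv * m ≤ D := by rw [hDeq]; omega
    have hcuD : cu * m ≤ D := by rw [hDeq]; omega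
    have hcwD : cw * m ≤ D := by rw [hDeq]; omega
    intro z hz
    rw [hCt t] at hz
    simp only [Finset.mem_insert, Finset.mem_singleton] at hz
    rcases hz with h | h | h <;> subst h
    · exact helt _ _ hvN hvm hcvD
    · exact helt _ _ huN hum hcuD
    · exact helt _ _ hwN hwm hcwD
  -- winning
  have hwin : ∀ (S : Finset ℕ) (t : ℕ), C t ⊆ S →
      MakerWinsRado (Matrix.of fun _ : Fin 1 => ![α, -β]) (fun _ => b) S := by
    intro S t hCS
    rw [hCt t] at hCS
    have h1 : vN + cv * m * t ∈ S := hCS (by simp)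
    have h2 : uN + cu * m * t ∈ S := hCS (by simp)
    have h3 : wN + cw * m * t ∈ S := hCS (by simp)
    have edge1 : α * ((vN + cv * m * t : ℕ) : ℤ) - β * ((uN + cu * m * t : ℕ) : ℤ) = b := by
      push_cast
      rw [hvc, huc, hcvZ, hcuZ]
      linear_combination e1
    have edge2 : α * ((wN + cw * m * t : ℕ) : ℤ) - β * ((vN + cv * m * t : ℕ) : ℤ) = b := by
      push_cast
      rw [hvc, hwc, hcvZ, hcwZ]
      linear_combination e2
    exact maker_cherry (fun M N hMN hwM => radoWin_mono _ _ hMN hwM) h1 h2 h3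
      (hne12 t) (hne13 t) (hne23 t)
      (radoWin_pair α β b _ _ (hne12 t) edge1)
      (by rw [Finset.pair_comm]
          exact radoWin_pair α β b _ _ (hne13 t).symm edge2)
  -- probability lower bound
  have hmain : ∀ n : ℕ, 1 - (1 - p n ^ 3) ^ (n / K) ≤ probRandomSubset n (p n)
      (fun S => MakerWinsRado (Matrix.of fun _ : Fin 1 => ![α, -β]) (fun _ => b) S) := by
    intro n
    refine prob_ge n (p n) (hp n).1 (hp n).2 _ C (n / K) (fun t ht => hsub n t ht)
      (fun s t _ _ hst => hdisj s t hst) (fun t _ => hcard3 t) ?_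
    rintro S ⟨t, ht, hts⟩
    exact hwin S t hts
  have hub : ∀ n : ℕ, probRandomSubset n (p n)
      (fun S => MakerWinsRado (Matrix.of fun _ : Fin 1 => ![α, -β]) (fun _ => b) S) ≤ 1 :=
    fun n => prob_le_one n (p n) (hp n).1 (hp n).2 _
  -- limits
  have hcube : Filter.Tendsto (fun n : ℕ => p n ^ 3 * n) Filter.atTop Filter.atTop := by
    have h3 : Filter.Tendsto (fun x : ℝ => x ^ 3) Filter.atTop Filter.atTop :=
      Filter.tendsto_pow_atTop (by norm_num)
    refine (h3.comp hpinf).congr fun n => ?_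
    show (p n * (n : ℝ) ^ ((1 : ℝ) / 3)) ^ 3 = p n ^ 3 * n
    rw [mul_pow]
    congr 1
    rw [← Real.rpow_natCast ((n : ℝ) ^ ((1 : ℝ) / 3)) 3, ← Real.rpow_mul (Nat.cast_nonneg n)]
    norm_num
  have hK0R : (0 : ℝ) < (K : ℝ) := by exact_mod_cast hK0
  have hlow : ∀ n : ℕ, p n ^ 3 * n / K + (-1) ≤ p n ^ 3 * ((n / K : ℕ) : ℝ) := by
    intro n
    have h2 : n % K < K := Nat.mod_lt n hK0
    have h3 : n < K * (n / K) + K := by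
      calc n = K * (n / K) + n % K := (Nat.div_add_mod n K).symm
        _ < K * (n / K) + K := Nat.add_lt_add_left h2 _
    have h3R : (n : ℝ) < (K : ℝ) * ((n / K : ℕ) : ℝ) + K := by exact_mod_cast h3
    have hp3 : 0 ≤ p n ^ 3 := pow_nonneg (hp n).1 _
    have hp31 : p n ^ 3 ≤ 1 := pow_le_one₀ (hp n).1 (hp n).2
    have h4 : p n ^ 3 * n ≤ p n ^ 3 * ((K : ℝ) * ((n / K : ℕ) : ℝ) + K) :=
      mul_le_mul_of_nonneg_left h3R.le hp3
    have h5 : p n ^ 3 * n / K ≤ p n ^ 3 * ((n / K : ℕ) : ℝ) + p n ^ 3 := by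
      rw [div_le_iff₀ hK0R]
      calc p n ^ 3 * n ≤ p n ^ 3 * ((K : ℝ) * ((n / K : ℕ) : ℝ) + K) := h4
        _ = (p n ^ 3 * ((n / K : ℕ) : ℝ) + p n ^ 3) * K := by ring
    linarith
  have hg : Filter.Tendsto (fun n : ℕ => p n ^ 3 * n / K + (-1)) Filter.atTop Filter.atTop :=
    Filter.tendsto_atTop_add_const_right _ _ (hcube.atTop_div_const hK0R)
  have hE : Filter.Tendsto (fun n : ℕ => p n ^ 3 * ((n / K : ℕ) : ℝ))
      Filter.atTop Filter.atTop := Filter.tendsto_atTop_mono hlow hg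
  have hexp0 : Filter.Tendsto (fun n : ℕ => Real.exp (-(p n ^ 3 * ((n / K : ℕ) : ℝ))))
      Filter.atTop (nhds 0) :=
    Real.tendsto_exp_atBot.comp (Filter.tendsto_neg_atTop_atBot.comp hE)
  have hpow0 : Filter.Tendsto (fun n : ℕ => (1 - p n ^ 3) ^ (n / K)) Filter.atTop (nhds 0) := by
    refine tendsto_of_tendsto_of_tendsto_of_le_of_le tendsto_const_nhds hexp0
      (fun n => ?_) (fun n => ?_)
    · have hp31 : p n ^ 3 ≤ 1 := pow_le_one₀ (hp n).1 (hp n).2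
      exact pow_nonneg (by linarith) _
    · have hp31 : p n ^ 3 ≤ 1 := pow_le_one₀ (hp n).1 (hp n).2
      have ha : 1 - p n ^ 3 ≤ Real.exp (-(p n ^ 3)) := by
        have := Real.add_one_le_exp (-(p n ^ 3))
        linarith
      calc (1 - p n ^ 3) ^ (n / K) ≤ (Real.exp (-(p n ^ 3))) ^ (n / K) :=
            pow_le_pow_left₀ (by linarith) ha _
        _ = Real.exp (-(p n ^ 3 * ((n / K : ℕ) : ℝ))) := by
            rw [← Real.exp_nat_mul]
            congr 1
            ring
  have hone : Filter.Tendsto (fun n : ℕ => 1 - (1 - p n ^ 3) ^ (n / K))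
      Filter.atTop (nhds 1) := by
    have hc : Filter.Tendsto (fun _ : ℕ => (1 : ℝ)) Filter.atTop (nhds 1) := tendsto_const_nhds
    simpa using hc.sub hpow0
  exact tendsto_of_tendsto_of_tendsto_of_le_of_le hone tendsto_const_nhds hmain hub
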